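/- Let A be a finite abelian group and y an automorphism of A of order 2. Then [Â, y] ≅ [A, y], where Â = Hom(A, ℂ*) is the dual group of A, with y acting on Â via α^y(a) = α(a^{y⁻¹}). -/
import Mathlib

open MonoidHom

private lemma dual_equiv (G : Type*) [CommGroup G] [Finite G] :
    Nonempty ((G →* ℂˣ) ≃* G) := by
  haveI : NeZero (Monoid.exponent G) := ⟨Monoid.exponent_ne_zero_of_finite⟩
  exact CommGroup.monoidHom_mulEquiv_of_hasEnoughRootsOfUnity G ℂ

private lemma dual_card (G : Type*) [CommGroup G] [Finite G] :
    Nat.card (G →* ℂˣ) = Nat.card G :=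
  Nat.card_congr (dual_equiv G).some.toEquiv

private noncomputable def Phi {A : Type*} [CommGroup A] (ψ : A →* A) :
    (A →* ℂˣ) →* (A →* ℂˣ) where
  toFun α := α.comp ψ
  map_one' := by ext; simp
  map_mul' α β := by ext; simp

private lemma key (A : Type*) [CommGroup A] [Finite A] (ψ : A →* A) :
    Nonempty ((Phi ψ).range ≃* ψ.range) := by
  set R := ψ.range with hR
  haveI : Finite (A →* ℂˣ) := Finite.of_equiv _ (dual_equiv A).some.toEquiv.symm
  haveI : Finite ((A ⧸ R) →* ℂˣ) := Finite.of_equiv _ (dual_equiv (A ⧸ R)).some.toEquiv.symm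
  haveI : Finite ((R : Subgroup A) →* ℂˣ) :=
    Finite.of_equiv _ (dual_equiv R).some.toEquiv.symm
  set res : (A →* ℂˣ) →* ((R : Subgroup A) →* ℂˣ) :=
    { toFun := fun α => α.comp R.subtype
      map_one' := by ext; simp
      map_mul' := fun α β => by ext; simp } with hres
  have hker : (Phi ψ).ker = res.ker := by
    ext α
    constructor
    · intro h
      have h' : ∀ a : A, α (ψ a) = 1 := fun a => by
        simpa [Phi] using DFunLike.congr_fun (mem_ker.mp h) a
      refine mem_ker.mpr ?_
      ext r
      obtain ⟨a, ha⟩ := r.2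
      simpa [hres, ← ha] using congrArg Units.val (h' a)
    · intro h
      have h' : ∀ r : R, α r = 1 := fun r => by
        simpa [hres] using DFunLike.congr_fun (mem_ker.mp h) r
      refine mem_ker.mpr ?_
      ext a
      simpa [Phi] using congrArg Units.val (h' ⟨ψ a, ⟨a, rfl⟩⟩)
  set j : ((A ⧸ R) →* ℂˣ) →* (A →* ℂˣ) :=
    { toFun := fun α => α.comp (QuotientGroup.mk' R)
      map_one' := by ext; simp
      map_mul' := fun α β => by ext; simp } with hj
  have hjinj : Function.Injective j := fun α β h => by
    ext x
    exact congrArg Units.val (DFunLike.congr_fun h x)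
  have hjrange : j.range = res.ker := by
    ext α
    simp only [MonoidHom.mem_range, mem_ker]
    constructor
    · rintro ⟨β, rfl⟩
      ext r
      have h1 : ((r : A) : A ⧸ R) = 1 := (QuotientGroup.eq_one_iff _).mpr r.2
      simp [hj, hres, h1]
    · intro h
      exact ⟨QuotientGroup.lift R α
        (fun r hr => by simpa [hres] using DFunLike.congr_fun h ⟨r, hr⟩),
        by ext a; rfl⟩
  have hcard_ker : Nat.card res.ker = Nat.card (A ⧸ R) := by
    rw [← hjrange, Nat.card_congr (MonoidHom.ofInjective hjinj).toEquiv.symm, dual_card]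
  have hcardA : Nat.card A = Nat.card (A ⧸ R) * Nat.card R :=
    Subgroup.card_eq_card_quotient_mul_card_subgroup R
  have hcard_dual : Nat.card (A →* ℂˣ)
      = Nat.card res.ker * Nat.card ((A →* ℂˣ) ⧸ res.ker) := by
    rw [Subgroup.card_eq_card_quotient_mul_card_subgroup res.ker, mul_comm]
  have hqcard : Nat.card ((A →* ℂˣ) ⧸ res.ker) = Nat.card R := by
    have h1 : Nat.card (A →* ℂˣ) = Nat.card A := dual_card A
    have hk : (Nat.card (A ⧸ R) : ℕ) ≠ 0 := Nat.card_pos.ne'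
    have h2 := hcard_dual
    rw [h1, hcardA, hcard_ker] at h2
    exact (Nat.eq_of_mul_eq_mul_left (Nat.pos_of_ne_zero hk) h2.symm)
  have hressurj : Function.Surjective res := by
    rw [← range_eq_top]
    refine Subgroup.eq_top_of_card_eq _ ?_
    rw [Nat.card_congr (QuotientGroup.quotientKerEquivRange res).toEquiv.symm, hqcard, dual_card]
  exact ⟨(QuotientGroup.quotientKerEquivRange (Phi ψ)).symm.trans
    ((QuotientGroup.quotientMulEquivOfEq hker).trans
      ((QuotientGroup.quotientKerEquivOfSurjective res hressurj).trans
        (dual_equiv R).some))⟩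

theorem dual_commutator_iso (A : Type*) [CommGroup A] [Fintype A]
    (y : MulAut A) (hy : orderOf y = 2) :
    Nonempty
      ((Subgroup.closure (Set.range fun α : A →* ℂˣ =>
          α⁻¹ * α.comp (y⁻¹ : MulAut A).toMonoidHom)) ≃*
       (Subgroup.closure (Set.range fun a : A => a⁻¹ * y a))) := by
  have hyy : y⁻¹ = y := by
    have h2 : y * y = 1 := by
      have := pow_orderOf_eq_one y
      rwa [hy, sq] at this
    rw [eq_comm, eq_inv_iff_mul_eq_one, h2]
  set ψ : A →* A :=
    { toFun := fun a => a⁻¹ * y a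
      map_one' := by simp
      map_mul' := fun a b => by
        simp only [map_mul]
        rw [mul_inv_rev, mul_comm b⁻¹ a⁻¹, mul_mul_mul_comm] } with hψ
  have h1 : Subgroup.closure (Set.range fun a : A => a⁻¹ * y a) = ψ.range := by
    have h : (Set.range fun a : A => a⁻¹ * y a) = (ψ.range : Set A) := by
      rw [MonoidHom.coe_range]; rfl
    rw [h, Subgroup.closure_eq]
  have h2 : Subgroup.closure (Set.range fun α : A →* ℂˣ =>
      α⁻¹ * α.comp (y⁻¹ : MulAut A).toMonoidHom) = (Phi ψ).range := by
    have hfe : (fun α : A →* ℂˣ => α⁻¹ * α.comp (y⁻¹ : MulAut A).toMonoidHom)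
        = ⇑(Phi ψ) := by
      funext α
      refine MonoidHom.ext fun a => ?_
      show ((α a)⁻¹ * α ((y⁻¹ : MulAut A) a) : ℂˣ) = α (a⁻¹ * y a)
      rw [hyy, map_mul, map_inv]
    have h : (Set.range fun α : A →* ℂˣ => α⁻¹ * α.comp (y⁻¹ : MulAut A).toMonoidHom)
        = ((Phi ψ).range : Set _) := by
      rw [MonoidHom.coe_range, hfe]
    rw [h, Subgroup.closure_eq]
  exact ⟨(MulEquiv.subgroupCongr h2).trans
    ((key A ψ).some.trans (MulEquiv.subgroupCongr h1.symm))⟩
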